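/- Let A be a nonzero m×n real matrix with ‖A‖₁² ≥ 50·m·‖A‖₂² and m ≥ 50. Then for every sampling distribution p on the entries of A, |ε₂(p)/ε₃(p) − 1| ≤ 1/50. -/

import Mathlib

open Matrix

/-- The spectral norm (ℓ2→ℓ2 operator norm) of a rectangular real matrix. -/
noncomputable def specNorm {m n : ℕ} (A : Matrix (Fin m) (Fin n) ℝ) : ℝ :=
  ‖(Matrix.toEuclideanLin A).toContinuousLinearMap‖

/-- `σ̃(p)²`: the maximum over rows and columns of `∑ (A i j)² / p i j`. -/
noncomputable def sigmaTildeSq {m n : ℕ} (A : Matrix (Fin m) (Fin n) ℝ)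
    (p : Fin m → Fin n → ℝ) : ℝ :=
  max (⨆ i, ∑ j, A i j ^ 2 / p i j) (⨆ j, ∑ i, A i j ^ 2 / p i j)

/-- `σ(p)² = max{ ‖D_r(p) − A Aᵀ‖₂, ‖D_c(p) − Aᵀ A‖₂ }`. -/
noncomputable def sigmaSq {m n : ℕ} (A : Matrix (Fin m) (Fin n) ℝ)
    (p : Fin m → Fin n → ℝ) : ℝ :=
  max (specNorm (Matrix.diagonal (fun i => ∑ j, A i j ^ 2 / p i j) - A * Aᵀ))
      (specNorm (Matrix.diagonal (fun j => ∑ i, A i j ^ 2 / p i j) - Aᵀ * A))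

/-- `R̃(p) = max_{i,j} |A i j| / p i j`. -/
noncomputable def RTilde {m n : ℕ} (A : Matrix (Fin m) (Fin n) ℝ)
    (p : Fin m → Fin n → ℝ) : ℝ :=
  ⨆ i, ⨆ j, |A i j| / p i j

/-- `R(p)`: the maximum over pairs `(i,j)` with `p i j > 0` of `‖A − B^(i,j)‖₂`. -/
noncomputable def Rp {m n : ℕ} (A : Matrix (Fin m) (Fin n) ℝ)
    (p : Fin m → Fin n → ℝ) : ℝ :=
  sSup {x : ℝ | ∃ i j, 0 < p i j ∧
    x = specNorm (A - Matrix.single i j (A i j / p i j))}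

/-- `α = √(log((m+n)/δ)/s)`. -/
noncomputable def alphaC (m n s : ℕ) (δ : ℝ) : ℝ :=
  Real.sqrt (Real.log ((m + n : ℝ) / δ) / s)

/-- `β = log((m+n)/δ)/(3s)`. -/
noncomputable def betaC (m n s : ℕ) (δ : ℝ) : ℝ :=
  Real.log ((m + n : ℝ) / δ) / (3 * s)


section helpers
open scoped Matrix.Norms.L2Operator

lemma specNorm_eq {m n : ℕ} (A : Matrix (Fin m) (Fin n) ℝ) : specNorm A = ‖A‖ := rfl

lemma specNorm_nonneg {m n : ℕ} (A : Matrix (Fin m) (Fin n) ℝ) : 0 ≤ specNorm A :=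
  (specNorm_eq A) ▸ norm_nonneg A

lemma specNorm_pos {m n : ℕ} (A : Matrix (Fin m) (Fin n) ℝ) (h : A ≠ 0) : 0 < specNorm A := by
  rw [specNorm_eq]; exact norm_pos_iff.mpr h

lemma conjT_eq_transpose {m n : ℕ} (A : Matrix (Fin m) (Fin n) ℝ) : Aᴴ = Aᵀ := by
  ext i j; simp [Matrix.conjTranspose]

lemma specNorm_transpose {m n : ℕ} (A : Matrix (Fin m) (Fin n) ℝ) :
    specNorm Aᵀ = specNorm A := by
  rw [specNorm_eq, specNorm_eq, ← Matrix.l2_opNorm_conjTranspose A, conjT_eq_transpose]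

lemma specNorm_AAT {m n : ℕ} (A : Matrix (Fin m) (Fin n) ℝ) :
    specNorm (A * Aᵀ) = specNorm A ^ 2 := by
  have h := Matrix.l2_opNorm_conjTranspose_mul_self Aᵀ
  rw [conjT_eq_transpose, Matrix.transpose_transpose] at h
  rw [specNorm_eq, h, ← specNorm_eq, specNorm_transpose, sq]

lemma specNorm_ATA {m n : ℕ} (A : Matrix (Fin m) (Fin n) ℝ) :
    specNorm (Aᵀ * A) = specNorm A ^ 2 := by
  have h := Matrix.l2_opNorm_conjTranspose_mul_self A
  rw [conjT_eq_transpose] at h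
  rw [specNorm_eq, h, ← specNorm_eq, sq]

lemma specNorm_sub_le {m n : ℕ} (A B : Matrix (Fin m) (Fin n) ℝ) :
    specNorm (A - B) ≤ specNorm A + specNorm B := by
  simp only [specNorm_eq]; exact norm_sub_le A B

lemma specNorm_sub_rev {m n : ℕ} (A B : Matrix (Fin m) (Fin n) ℝ) :
    specNorm (A - B) = specNorm (B - A) := by
  simp only [specNorm_eq]; exact norm_sub_rev A B

lemma specNorm_sub_ge {m n : ℕ} (A B : Matrix (Fin m) (Fin n) ℝ) :
    specNorm A - specNorm B ≤ specNorm (A - B) := by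
  simp only [specNorm_eq]; exact norm_sub_norm_le A B

lemma l2norm_le_bound {m n : ℕ} (A : Matrix (Fin m) (Fin n) ℝ) (c : ℝ) (hc : 0 ≤ c)
    (h : ∀ x : EuclideanSpace ℝ (Fin n),
      ‖((WithLp.equiv 2 (Fin m → ℝ)).symm (A *ᵥ (WithLp.equiv 2 (Fin n → ℝ) x)) : EuclideanSpace ℝ (Fin m))‖ ≤ c * ‖x‖) :
    ‖A‖ ≤ c := by
  rw [Matrix.l2_opNorm_def]
  apply ContinuousLinearMap.opNorm_le_bound _ hc
  intro x
  exact h x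

lemma l2norm_mulVec_le {m n : ℕ} (A : Matrix (Fin m) (Fin n) ℝ) (x : EuclideanSpace ℝ (Fin n)) :
    ‖((WithLp.equiv 2 (Fin m → ℝ)).symm (A *ᵥ (WithLp.equiv 2 (Fin n → ℝ) x)) : EuclideanSpace ℝ (Fin m))‖ ≤ ‖A‖ * ‖x‖ := by
  simpa using A.l2_opNorm_mulVec x

lemma euclidean_coord_le {m : ℕ} (x : EuclideanSpace ℝ (Fin m)) (j : Fin m) : |x j| ≤ ‖x‖ := by
  rw [EuclideanSpace.norm_eq, ← Real.sqrt_sq_eq_abs]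
  apply Real.sqrt_le_sqrt
  have : x j ^ 2 = ‖x j‖ ^ 2 := by rw [Real.norm_eq_abs, sq_abs]
  rw [this]
  exact Finset.single_le_sum (f := fun i => ‖x i‖^2) (fun i _ => by positivity) (Finset.mem_univ j)

lemma specNorm_diagonal_le {m : ℕ} (d : Fin m → ℝ) (c : ℝ) (hc : 0 ≤ c) (h : ∀ i, |d i| ≤ c) :
    specNorm (Matrix.diagonal d) ≤ c := by
  rw [specNorm_eq]
  apply l2norm_le_bound _ c hc
  intro x
  rw [EuclideanSpace.norm_eq, EuclideanSpace.norm_eq]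
  simp only [WithLp.equiv_symm_apply, WithLp.equiv_apply, PiLp.toLp_apply, Matrix.mulVec_diagonal]
  rw [← Real.sqrt_sq hc, ← Real.sqrt_mul (by positivity), Finset.mul_sum]
  apply Real.sqrt_le_sqrt
  apply Finset.sum_le_sum
  intro i _
  rw [norm_mul, mul_pow]
  have hb : ‖d i‖ ^ 2 ≤ c ^ 2 := by
    rw [Real.norm_eq_abs]
    exact pow_le_pow_left₀ (abs_nonneg _) (h i) 2
  exact mul_le_mul_of_nonneg_right hb (by positivity)

lemma specNorm_diagonal_ge {m : ℕ} (d : Fin m → ℝ) (hd : ∀ i, 0 ≤ d i) (i : Fin m) :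
    d i ≤ specNorm (Matrix.diagonal d) := by
  rw [specNorm_eq]
  have := l2norm_mulVec_le (Matrix.diagonal d) (EuclideanSpace.single i 1)
  have h1 : (WithLp.equiv 2 (Fin m → ℝ)) (EuclideanSpace.single i (1:ℝ)) = Pi.single i 1 := rfl
  rw [h1] at this
  have h2 : Matrix.diagonal d *ᵥ Pi.single i 1 = Pi.single i (d i) := by
    ext k
    rw [Matrix.mulVec_diagonal]
    by_cases hk : k = i
    · subst hk; simp
    · simp [Pi.single_eq_of_ne hk]
  rw [h2] at this
  have h3 : ((WithLp.equiv 2 (Fin m → ℝ)).symm (Pi.single i (d i)) : EuclideanSpace ℝ (Fin m)) =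
      EuclideanSpace.single i (d i) := rfl
  rw [h3, EuclideanSpace.norm_single, EuclideanSpace.norm_single] at this
  simpa [abs_of_nonneg (hd i)] using this

lemma stdBasis_mulVec {m n : ℕ} (i : Fin m) (j : Fin n) (c : ℝ) (v : Fin n → ℝ) :
    Matrix.single i j c *ᵥ v = Pi.single i (c * v j) := by
  ext k
  rw [Matrix.mulVec]
  simp only [Matrix.single, Matrix.of_apply, dotProduct]
  by_cases hk : k = i
  · subst hk
    rw [Pi.single_eq_same, Finset.sum_eq_single j]
    · simp
    · intro b _ hb; simp [hb.symm]
    · simp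
  · rw [Pi.single_eq_of_ne hk]
    apply Finset.sum_eq_zero
    intro b _
    have : ¬ i = k := fun h => hk h.symm
    simp [this]

lemma specNorm_stdBasis {m n : ℕ} (i : Fin m) (j : Fin n) (c : ℝ) :
    specNorm (Matrix.single i j c : Matrix (Fin m) (Fin n) ℝ) = |c| := by
  rw [specNorm_eq]
  apply le_antisymm
  · apply l2norm_le_bound _ _ (abs_nonneg c)
    intro x
    rw [stdBasis_mulVec]
    have h3 : ((WithLp.equiv 2 (Fin m → ℝ)).symm (Pi.single i (c * (WithLp.equiv 2 (Fin n → ℝ)) x j)) : EuclideanSpace ℝ (Fin m)) =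
        EuclideanSpace.single i (c * x j) := rfl
    rw [h3, EuclideanSpace.norm_single, Real.norm_eq_abs, abs_mul]
    exact mul_le_mul_of_nonneg_left (euclidean_coord_le x j) (abs_nonneg c)
  · have := l2norm_mulVec_le (Matrix.single i j c) (EuclideanSpace.single j 1)
    have h1 : (WithLp.equiv 2 (Fin n → ℝ)) (EuclideanSpace.single j (1:ℝ)) = Pi.single j 1 := rfl
    rw [h1, stdBasis_mulVec] at this
    have h3 : ((WithLp.equiv 2 (Fin m → ℝ)).symm (Pi.single i (c * (Pi.single j (1:ℝ) : Fin n → ℝ) j)) : EuclideanSpace ℝ (Fin m)) =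
        EuclideanSpace.single i (c * 1) := by rw [Pi.single_eq_same]; rfl
    rw [h3, EuclideanSpace.norm_single, EuclideanSpace.norm_single] at this
    simpa using this

end helpers


lemma sqrt_low (T σ L u v : ℝ) (hT : 50 * L ^ 2 ≤ T) (h1 : T - σ ≤ L ^ 2)
    (hu : u ^ 2 = T) (hv : v ^ 2 = σ) (hu0 : 0 < u) (hv0 : 0 ≤ v) :
    (49 / 50) * u ≤ v := by
  nlinarith [sq_nonneg (v - (49/50) * u), sq_nonneg (v + (49/50) * u), mul_pos hu0 hu0]

lemma sqrt_high (T σ L u v : ℝ) (hT : 50 * L ^ 2 ≤ T) (h1 : σ - T ≤ L ^ 2)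
    (hu : u ^ 2 = T) (hv : v ^ 2 = σ) (hu0 : 0 < u) (hv0 : 0 ≤ v) :
    v ≤ (51 / 50) * u := by
  nlinarith [sq_nonneg (v - (51/50) * u), sq_nonneg (v + (51/50) * u)]

lemma fifty_L (M L S : ℝ) (hM : 50 ≤ M) (hL : 0 ≤ L) (hS : 0 ≤ S)
    (h : 50 * M * L ^ 2 ≤ S ^ 2) : 50 * L ≤ S := by
  nlinarith

lemma final_ratio (a b u Rt v rp : ℝ) (ha : 0 < a) (hb : 0 < b)
    (hu0 : 0 < u) (hRt0 : 0 < Rt)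
    (hv1 : (49 / 50) * u ≤ v) (hv2 : v ≤ (51 / 50) * u)
    (hr1 : (49 / 50) * Rt ≤ rp) (hr2 : rp ≤ (51 / 50) * Rt) :
    |(a * v + b * rp) / (a * u + b * Rt) - 1| ≤ 1 / 50 := by
  set e3 := a * u + b * Rt with he3
  have he3pos : 0 < e3 := by positivity
  have key : |a * v + b * rp - e3| ≤ (1 / 50) * e3 := by
    rw [abs_le, he3]
    constructor <;> nlinarith [mul_le_mul_of_nonneg_left hv1 ha.le,
      mul_le_mul_of_nonneg_left hv2 ha.le, mul_le_mul_of_nonneg_left hr1 hb.le,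
      mul_le_mul_of_nonneg_left hr2 hb.le]
  calc |(a * v + b * rp) / e3 - 1| = |a * v + b * rp - e3| / e3 := by
        rw [div_sub_one (ne_of_gt he3pos), abs_div, abs_of_pos he3pos]
    _ ≤ 1 / 50 := by
        rw [div_le_iff₀ he3pos]
        linarith [key]

lemma cs_step {m n : ℕ} (A : Matrix (Fin m) (Fin n) ℝ) (p : Fin m → Fin n → ℝ)
    (hp0 : ∀ i j, 0 ≤ p i j) (hpsum : ∑ i, ∑ j, p i j = 1)
    (hppos : ∀ i j, A i j ≠ 0 → 0 < p i j) :
    (∑ i, ∑ j, |A i j|) ^ 2 ≤ ∑ i, ∑ j, A i j ^ 2 / p i j := by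
  have key := Finset.sum_mul_sq_le_sq_mul_sq (Finset.univ : Finset (Fin m × Fin n))
    (fun z => Real.sqrt (p z.1 z.2))
    (fun z => if p z.1 z.2 = 0 then 0 else |A z.1 z.2| / Real.sqrt (p z.1 z.2))
  have e1 : ∑ z : Fin m × Fin n, Real.sqrt (p z.1 z.2) *
      (if p z.1 z.2 = 0 then 0 else |A z.1 z.2| / Real.sqrt (p z.1 z.2)) = ∑ i, ∑ j, |A i j| := by
    rw [← Finset.sum_product']
    apply Finset.sum_congr rfl
    rintro ⟨i, j⟩ -
    by_cases h : p i j = 0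
    · simp only [h, if_pos]
      have : A i j = 0 := by
        by_contra hA
        exact absurd h (ne_of_gt (hppos i j hA))
      simp [this]
    · rw [if_neg h]
      have hp : 0 < p i j := lt_of_le_of_ne (hp0 i j) (Ne.symm h)
      field_simp
  have e2 : ∑ z : Fin m × Fin n, Real.sqrt (p z.1 z.2) ^ 2 = 1 := by
    rw [← hpsum, ← Finset.sum_product']
    apply Finset.sum_congr rfl
    rintro ⟨i, j⟩ -
    exact Real.sq_sqrt (hp0 i j)
  have e3 : ∑ z : Fin m × Fin n,
      (if p z.1 z.2 = 0 then 0 else |A z.1 z.2| / Real.sqrt (p z.1 z.2)) ^ 2 =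
      ∑ i, ∑ j, A i j ^ 2 / p i j := by
    rw [← Finset.sum_product']
    apply Finset.sum_congr rfl
    rintro ⟨i, j⟩ -
    by_cases h : p i j = 0
    · simp [h]
    · rw [if_neg h]
      have hp : 0 < p i j := lt_of_le_of_ne (hp0 i j) (Ne.symm h)
      rw [div_pow, Real.sq_sqrt (hp0 i j), sq_abs]
  rw [e1, e2, e3, one_mul] at key
  exact key


set_option maxHeartbeats 1000000 in
/-- If `A` is nonzero with `‖A‖₁² ≥ 50·m·‖A‖₂²` and `m ≥ 50`, then for every sampling
distribution `p` on the entries of `A`, `|ε₂(p)/ε₃(p) − 1| ≤ 1/50`, where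
`ε₂(p) = α·σ(p) + β·R(p)` and `ε₃(p) = α·σ̃(p) + β·R̃(p)`. -/
theorem stmt5 (m n : ℕ) (hm : 50 ≤ m) (hn : 0 < n)
    (A : Matrix (Fin m) (Fin n) ℝ) (hA : A ≠ 0)
    (hnorm : 50 * m * specNorm A ^ 2 ≤ (∑ i, ∑ j, |A i j|) ^ 2)
    (s : ℕ) (hs : 1 ≤ s) (δ : ℝ) (hδ : δ ∈ Set.Ioo (0 : ℝ) 1)
    (p : Fin m → Fin n → ℝ)
    (hp0 : ∀ i j, 0 ≤ p i j) (hpsum : ∑ i, ∑ j, p i j = 1)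
    (hppos : ∀ i j, A i j ≠ 0 → 0 < p i j) :
    |(alphaC m n s δ * Real.sqrt (sigmaSq A p) + betaC m n s δ * Rp A p) /
        (alphaC m n s δ * Real.sqrt (sigmaTildeSq A p) + betaC m n s δ * RTilde A p) - 1|
      ≤ 1 / 50 := by
  haveI : Nonempty (Fin m) := ⟨⟨0, by omega⟩⟩
  haveI : Nonempty (Fin n) := ⟨⟨0, by omega⟩⟩
  set L := specNorm A with hLdef
  have hL : 0 < L := specNorm_pos A hA
  set d : Fin m → ℝ := fun i => ∑ j, A i j ^ 2 / p i j with hd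
  set e : Fin n → ℝ := fun j => ∑ i, A i j ^ 2 / p i j with he
  have hd0 : ∀ i, 0 ≤ d i := fun i =>
    Finset.sum_nonneg fun j _ => div_nonneg (sq_nonneg _) (hp0 i j)
  have he0 : ∀ j, 0 ≤ e j := fun j =>
    Finset.sum_nonneg fun i _ => div_nonneg (sq_nonneg _) (hp0 i j)
  set S1 : ℝ := ⨆ i, d i with hS1def
  set S2 : ℝ := ⨆ j, e j with hS2def
  have hdS1 : ∀ i, d i ≤ S1 := fun i => le_ciSup (Set.finite_range d).bddAbove i
  have heS2 : ∀ j, e j ≤ S2 := fun j => le_ciSup (Set.finite_range e).bddAbove j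
  have hS10 : 0 ≤ S1 := le_trans (hd0 (Classical.arbitrary _)) (hdS1 _)
  have hS20 : 0 ≤ S2 := le_trans (he0 (Classical.arbitrary _)) (heS2 _)
  set T : ℝ := max S1 S2 with hTdef
  have hst : sigmaTildeSq A p = T := by
    simp only [sigmaTildeSq, hTdef, hS1def, hS2def, hd, he]
  -- 50 L² ≤ T
  have hcs := cs_step A p hp0 hpsum hppos
  have hsum_le : ∑ i, ∑ j, A i j ^ 2 / p i j ≤ (m : ℝ) * S1 := by
    calc ∑ i, d i ≤ ∑ _i : Fin m, S1 := Finset.sum_le_sum fun i _ => hdS1 i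
      _ = (m : ℝ) * S1 := by simp [Finset.sum_const, nsmul_eq_mul]
  have hT50 : 50 * L ^ 2 ≤ T := by
    have hm' : (0 : ℝ) < m := by positivity
    have h1 : (m : ℝ) * (50 * L ^ 2) ≤ (m : ℝ) * S1 := by
      calc (m : ℝ) * (50 * L ^ 2) = 50 * m * L ^ 2 := by ring
        _ ≤ ∑ i, ∑ j, A i j ^ 2 / p i j := le_trans hnorm hcs
        _ ≤ (m : ℝ) * S1 := hsum_le
    have h2 : 50 * L ^ 2 ≤ S1 := le_of_mul_le_mul_left h1 hm'
    exact le_trans h2 (le_max_left _ _)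
  have hT0 : 0 < T := lt_of_lt_of_le (by positivity) hT50
  -- RTilde bounds
  have hF : ∀ i j, |A i j| / p i j ≤ RTilde A p := by
    intro i j
    rw [RTilde]
    have b1 : BddAbove (Set.range fun j' => |A i j'| / p i j') :=
      (Set.finite_range _).bddAbove
    have b2 : BddAbove (Set.range fun i' => ⨆ j', |A i' j'| / p i' j') :=
      (Set.finite_range _).bddAbove
    exact le_trans (le_ciSup b1 j) (le_ciSup b2 i)
  have hRtL1 : ∑ i, ∑ j, |A i j| ≤ RTilde A p := by
    have step : ∀ i j, |A i j| ≤ p i j * RTilde A p := by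
      intro i j
      by_cases h : p i j = 0
      · have hAij : A i j = 0 := by
          by_contra hc
          exact absurd h (ne_of_gt (hppos i j hc))
        simp [hAij, h]
      · have hp : 0 < p i j := lt_of_le_of_ne (hp0 i j) (Ne.symm h)
        have := (div_le_iff₀ hp).mp (hF i j)
        linarith [this]
    calc ∑ i, ∑ j, |A i j| ≤ ∑ i, ∑ j, p i j * RTilde A p :=
          Finset.sum_le_sum fun i _ => Finset.sum_le_sum fun j _ => step i j
      _ = RTilde A p := by
          simp only [← Finset.sum_mul]
          rw [hpsum, one_mul]
  have h50L : 50 * L ≤ ∑ i, ∑ j, |A i j| := by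
    have hS0 : 0 ≤ ∑ i, ∑ j, |A i j| :=
      Finset.sum_nonneg fun i _ => Finset.sum_nonneg fun j _ => abs_nonneg _
    have hm' : (50 : ℝ) ≤ m := by exact_mod_cast hm
    exact fifty_L m L _ hm' hL.le hS0 hnorm
  have hRt50 : 50 * L ≤ RTilde A p := le_trans h50L hRtL1
  have hRt0 : 0 < RTilde A p := lt_of_lt_of_le (by positivity) hRt50
  -- sigma bounds
  have hDr : specNorm (Matrix.diagonal d) = S1 := by
    apply le_antisymm
    · exact specNorm_diagonal_le d S1 hS10 fun i => by
        rw [abs_of_nonneg (hd0 i)]; exact hdS1 i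
    · exact ciSup_le fun i => specNorm_diagonal_ge d hd0 i
  have hDc : specNorm (Matrix.diagonal e) = S2 := by
    apply le_antisymm
    · exact specNorm_diagonal_le e S2 hS20 fun j => by
        rw [abs_of_nonneg (he0 j)]; exact heS2 j
    · exact ciSup_le fun j => specNorm_diagonal_ge e he0 j
  have hN1 : |specNorm (Matrix.diagonal d - A * Aᵀ) - S1| ≤ L ^ 2 := by
    rw [abs_le]
    constructor
    · have := specNorm_sub_ge (Matrix.diagonal d) (A * Aᵀ)
      rw [hDr, specNorm_AAT] at this
      linarith
    · have := specNorm_sub_le (Matrix.diagonal d) (A * Aᵀ)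
      rw [hDr, specNorm_AAT] at this
      linarith
  have hN2 : |specNorm (Matrix.diagonal e - Aᵀ * A) - S2| ≤ L ^ 2 := by
    rw [abs_le]
    constructor
    · have := specNorm_sub_ge (Matrix.diagonal e) (Aᵀ * A)
      rw [hDc, specNorm_ATA] at this
      linarith
    · have := specNorm_sub_le (Matrix.diagonal e) (Aᵀ * A)
      rw [hDc, specNorm_ATA] at this
      linarith
  have hsigdef : sigmaSq A p =
      max (specNorm (Matrix.diagonal d - A * Aᵀ)) (specNorm (Matrix.diagonal e - Aᵀ * A)) := by
    simp only [sigmaSq, hd, he]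
  have hsig : |sigmaSq A p - T| ≤ L ^ 2 := by
    rw [hsigdef, hTdef]
    exact le_trans (abs_max_sub_max_le_max _ _ _ _) (max_le hN1 hN2)
  have hsig0 : 0 ≤ sigmaSq A p :=
    le_trans (specNorm_nonneg _) (le_max_left _ _ : _ ≤ sigmaSq A p)
  -- sqrt bounds
  set u : ℝ := Real.sqrt (sigmaTildeSq A p) with hudef
  set v : ℝ := Real.sqrt (sigmaSq A p) with hvdef
  have hu2 : u ^ 2 = T := by rw [hudef, hst, Real.sq_sqrt hT0.le]
  have hv2 : v ^ 2 = sigmaSq A p := Real.sq_sqrt hsig0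
  have hu0 : 0 < u := by rw [hudef, hst]; exact Real.sqrt_pos.mpr hT0
  have hv0 : 0 ≤ v := Real.sqrt_nonneg _
  have hsig_abs := abs_le.mp hsig
  have hvlow : (49 / 50) * u ≤ v :=
    sqrt_low T (sigmaSq A p) L u v hT50 (by linarith [hsig_abs.1]) hu2 hv2 hu0 hv0
  have hvhigh : v ≤ (51 / 50) * u :=
    sqrt_high T (sigmaSq A p) L u v hT50 (by linarith [hsig_abs.2]) hu2 hv2 hu0 hv0
  -- Rp bounds
  set Sset : Set ℝ := {x : ℝ | ∃ i j, 0 < p i j ∧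
    x = specNorm (A - Matrix.single i j (A i j / p i j))} with hSsetdef
  have hRpdef : Rp A p = sSup Sset := by
    simp only [Rp, hSsetdef]
  have hne : Sset.Nonempty := by
    have : ∃ i j, A i j ≠ 0 := by
      by_contra h
      push_neg at h
      apply hA
      ext i j
      simpa using h i j
    obtain ⟨i, j, hij⟩ := this
    exact ⟨_, i, j, hppos i j hij, rfl⟩
  have hbdd : BddAbove Sset := by
    have hsub : Sset ⊆ Set.range (fun z : Fin m × Fin n =>
        specNorm (A - Matrix.single z.1 z.2 (A z.1 z.2 / p z.1 z.2))) := by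
      rintro x ⟨i, j, -, rfl⟩
      exact ⟨(i, j), rfl⟩
    exact ((Set.finite_range _).subset hsub).bddAbove
  have hRp0 : 0 ≤ Rp A p := by
    obtain ⟨x, hx⟩ := hne
    obtain ⟨i, j, hpij, rfl⟩ := hx
    exact le_trans (specNorm_nonneg _) (le_csSup hbdd ⟨i, j, hpij, rfl⟩)
  have hRub : Rp A p ≤ RTilde A p + L := by
    rw [hRpdef]
    apply csSup_le hne
    rintro x ⟨i, j, hpij, rfl⟩
    have h1 : specNorm (A - Matrix.single i j (A i j / p i j)) ≤
        L + specNorm (Matrix.single i j (A i j / p i j)) :=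
      specNorm_sub_le _ _
    have h2 : specNorm (Matrix.single i j (A i j / p i j)) = |A i j| / p i j := by
      rw [specNorm_stdBasis, abs_div, abs_of_pos hpij]
    rw [h2] at h1
    linarith [hF i j]
  have hRlb : RTilde A p ≤ Rp A p + L := by
    rw [RTilde]
    apply ciSup_le
    intro i
    apply ciSup_le
    intro j
    by_cases hpij : 0 < p i j
    · have hmem : specNorm (A - Matrix.single i j (A i j / p i j)) ∈ Sset :=
        ⟨i, j, hpij, rfl⟩
      have h2 : |A i j| / p i j = specNorm (Matrix.single i j (A i j / p i j)) := by
        rw [specNorm_stdBasis, abs_div, abs_of_pos hpij]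
      have h3 : specNorm (Matrix.single i j (A i j / p i j)) ≤
          specNorm (A - Matrix.single i j (A i j / p i j)) + L := by
        have := specNorm_sub_ge (Matrix.single i j (A i j / p i j)) A
        rw [specNorm_sub_rev (Matrix.single i j (A i j / p i j)) A] at this
        linarith
      have h4 : specNorm (A - Matrix.single i j (A i j / p i j)) ≤ Rp A p :=
        le_csSup hbdd hmem
      rw [h2]
      linarith
    · have hpz : p i j = 0 := le_antisymm (not_lt.mp hpij) (hp0 i j)
      have hAij : A i j = 0 := by
        by_contra hc
        exact hpij (hppos i j hc)
      rw [hAij]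
      simp
      linarith
  have hRplow : (49 / 50) * RTilde A p ≤ Rp A p := by linarith
  have hRphigh : Rp A p ≤ (51 / 50) * RTilde A p := by linarith
  -- positivity of alpha, beta
  have hlog : 0 < Real.log ((m + n : ℝ) / δ) := by
    apply Real.log_pos
    rw [one_lt_div hδ.1]
    have : (1 : ℝ) ≤ (m : ℝ) + n := by
      have : (1 : ℝ) ≤ (m : ℝ) := by exact_mod_cast le_trans (by norm_num) hm
      have hn' : (0 : ℝ) ≤ n := by positivity
      linarith
    linarith [hδ.2]
  have hs' : (0 : ℝ) < s := by exact_mod_cast hs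
  have ha : 0 < alphaC m n s δ := Real.sqrt_pos.mpr (div_pos hlog hs')
  have hb : 0 < betaC m n s δ := div_pos hlog (by positivity)
  -- final arithmetic
  exact final_ratio (alphaC m n s δ) (betaC m n s δ) u (RTilde A p) v (Rp A p)
    ha hb hu0 hRt0 hvlow hvhigh hRplow hRphigh
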